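/- Let λ_1,…,λ_l be distinct complex numbers with λ_a − λ_b ∉ 2πi·ℤ for all a ≠ b, and let k_1,…,k_l be positive integers. Then the V-valued functions u ↦ e^{λ_j u} u^a v_b (1 ≤ j ≤ l, 0 ≤ a ≤ k_j − 1, 1 ≤ b ≤ d) are linearly independent over the field of one-periodic meromorphic functions on ℂ: if c_{j,a,b} are one-periodic meromorphic functions on ℂ such that Σ_{j,a,b} c_{j,a,b}(u) e^{λ_j u} u^a v_b = 0 for all u outside the poles of the c_{j,a,b}, then every c_{j,a,b} is identically zero. -/

import Mathlib

noncomputable section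

open Polynomial

/-- `g` is meromorphic at the point `x`. -/
def MeromAt (g : ℂ → ℂ) (x : ℂ) : Prop :=
  ∃ k : ℕ, AnalyticAt ℂ (fun z => (z - x) ^ k * g z) x

namespace Statement5Aux

lemma comp_X_add_C_degree (p : Polynomial ℂ) (z : ℂ) :
    (p.comp (X + C z)).degree = p.degree ∧ (p.comp (X + C z)).leadingCoeff = p.leadingCoeff := by
  rcases eq_or_ne p 0 with h|h
  · simp [h]
  · have h1 : (p.comp (X + C z)).natDegree = p.natDegree := by
      simp [Polynomial.natDegree_comp]
    have h2 : (p.comp (X + C z)).leadingCoeff = p.leadingCoeff := by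
      rw [Polynomial.leadingCoeff_comp (by simp)]
      simp
    have h3 : p.comp (X + C z) ≠ 0 := by
      intro hc
      apply h
      rw [← Polynomial.leadingCoeff_eq_zero, ← h2, hc, leadingCoeff_zero]
    exact ⟨by rw [degree_eq_natDegree h, degree_eq_natDegree h3, h1], h2⟩

/-- shift-difference operator -/
noncomputable def Tdiff (μ ν : ℂ) (p : Polynomial ℂ) : Polynomial ℂ :=
  C μ * p.comp (X + C 1) - C ν * p

lemma Tdiff_eval (μ ν : ℂ) (p : Polynomial ℂ) (x : ℂ) :
    (Tdiff μ ν p).eval x = μ * p.eval (x + 1) - ν * p.eval x := by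
  simp [Tdiff, eval_comp]

lemma Tdiff_zero (μ ν : ℂ) : Tdiff μ ν 0 = 0 := by simp [Tdiff]

lemma Tdiff_ne (μ ν : ℂ) (hμν : μ ≠ ν) (p : Polynomial ℂ) (hp : p ≠ 0) :
    Tdiff μ ν p ≠ 0 ∧ (Tdiff μ ν p).natDegree = p.natDegree := by
  have h := comp_X_add_C_degree p 1
  set d := p.natDegree with hd
  have hndc : (p.comp (X + C 1)).natDegree = d := by
    rw [Polynomial.natDegree_comp, natDegree_X_add_C, mul_one]
  have hcoeff : (Tdiff μ ν p).coeff d = (μ - ν) * p.leadingCoeff := by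
    have hc : (p.comp (X + C 1)).coeff d = p.leadingCoeff := by
      rw [← hndc, ← Polynomial.leadingCoeff, h.2]
    simp only [Tdiff, Polynomial.coeff_sub, coeff_C_mul, hc]
    rw [Polynomial.coeff_natDegree]
    ring
  have hne : (Tdiff μ ν p).coeff d ≠ 0 := by
    rw [hcoeff]
    exact mul_ne_zero (sub_ne_zero.2 hμν) (Polynomial.leadingCoeff_ne_zero.2 hp)
  have hT0 : Tdiff μ ν p ≠ 0 := fun hc => hne (by simp [hc])
  refine ⟨hT0, le_antisymm ?_ (Polynomial.le_natDegree_of_ne_zero hne)⟩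
  apply le_trans (Polynomial.natDegree_sub_le _ _)
  apply max_le
  · exact le_trans (Polynomial.natDegree_C_mul_le _ _) (le_of_eq hndc)
  · exact Polynomial.natDegree_C_mul_le _ _

lemma Tdiff_same_iter (ν : ℂ) : ∀ (m : ℕ) (p : Polynomial ℂ), p.natDegree < m →
    (Tdiff ν ν)^[m] p = 0 := by
  intro m
  induction m with
  | zero => intro p h; omega
  | succ m ih =>
    intro p h
    rcases eq_or_ne p 0 with h0 | h0
    · rw [h0]; exact Function.iterate_fixed (Tdiff_zero ν ν) _
    rw [Function.iterate_succ_apply]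
    have hT : Tdiff ν ν p = C ν * (p.comp (X + C 1) - p) := by rw [Tdiff]; ring
    rcases Nat.eq_zero_or_pos p.natDegree with hd0 | hd0
    · have : p = C (p.coeff 0) := Polynomial.eq_C_of_natDegree_eq_zero hd0
      have : Tdiff ν ν p = 0 := by rw [hT, this]; simp
      rw [this]; exact Function.iterate_fixed (Tdiff_zero ν ν) _
    · apply ih
      have hcomp := comp_X_add_C_degree p 1
      have hc0 : p.comp (X + C 1) ≠ 0 := fun hc => h0 (by
        rw [← Polynomial.leadingCoeff_eq_zero, ← hcomp.2, hc, Polynomial.leadingCoeff_zero])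
      have hlt : (p.comp (X + C 1) - p).degree < p.degree := by
        rw [← hcomp.1]
        exact Polynomial.degree_sub_lt hcomp.1 hc0 hcomp.2
      have hlt2 : (p.comp (X + C 1) - p).natDegree < p.natDegree := by
        rcases eq_or_ne (p.comp (X + C 1) - p) 0 with hz | hz
        · rwa [hz, Polynomial.natDegree_zero]
        · exact Polynomial.natDegree_lt_natDegree hz hlt
      have : (Tdiff ν ν p).natDegree ≤ (p.comp (X + C 1) - p).natDegree := by
        rw [hT]; exact Polynomial.natDegree_C_mul_le _ _
      omega

lemma Tdiff_iter_ne (μ ν : ℂ) (hμν : μ ≠ ν) (M : ℕ) (q : Polynomial ℂ) (hq : q ≠ 0) :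
    (Tdiff μ ν)^[M] q ≠ 0 := by
  induction M with
  | zero => simpa
  | succ M ihM =>
    rw [Function.iterate_succ_apply']
    exact (Tdiff_ne μ ν hμν _ ihM).1

lemma exppoly : ∀ (l : ℕ) (μ : Fin l → ℂ), (∀ j, μ j ≠ 0) → Function.Injective μ →
    ∀ (p : Fin l → Polynomial ℂ),
    (∀ n : ℕ, ∑ j, μ j ^ n * (p j).eval (n : ℂ) = 0) → ∀ j, p j = 0 := by
  intro l
  induction l with
  | zero => intro μ _ _ p _ j; exact j.elim0
  | succ l ih =>
    intro μ hμ0 hinj p hsum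
    set j₀ := Fin.last l with hj₀
    set m := (p j₀).natDegree + 1 with hm
    have key : ∀ (M n : ℕ), ∑ j, μ j ^ n * ((Tdiff (μ j) (μ j₀))^[M] (p j)).eval (n : ℂ) = 0 := by
      intro M
      induction M with
      | zero => simpa using hsum
      | succ M ihM =>
        intro n
        have e1 := ihM (n + 1)
        have e0 := ihM n
        have : ∑ j, μ j ^ n * ((Tdiff (μ j) (μ j₀))^[M + 1] (p j)).eval (n : ℂ)
            = (∑ j, μ j ^ (n+1) * ((Tdiff (μ j) (μ j₀))^[M] (p j)).eval ((n:ℂ) + 1))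
              - μ j₀ * ∑ j, μ j ^ n * ((Tdiff (μ j) (μ j₀))^[M] (p j)).eval (n : ℂ) := by
          rw [Finset.mul_sum, ← Finset.sum_sub_distrib]
          apply Finset.sum_congr rfl
          intro j _
          rw [Function.iterate_succ_apply', Tdiff_eval]
          ring
        rw [this, e0]
        push_cast at e1
        rw [e1]
        ring
    have hlast : (Tdiff (μ j₀) (μ j₀))^[m] (p j₀) = 0 :=
      Tdiff_same_iter (μ j₀) m (p j₀) (by omega)
    have hcast : ∀ j : Fin l, (Tdiff (μ j.castSucc) (μ j₀))^[m] (p j.castSucc) = 0 := by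
      apply ih (fun j => μ j.castSucc) (fun j => hμ0 _)
        (hinj.comp (Fin.castSucc_injective l))
      intro n
      have := key m n
      rw [Fin.sum_univ_castSucc] at this
      rw [hlast] at this
      simpa using this
    have hne : ∀ j : Fin l, μ j.castSucc ≠ μ j₀ := by
      intro j hc
      exact absurd (hinj hc) (Fin.ne_last_of_lt (Fin.castSucc_lt_last j))
    have hp : ∀ j : Fin l, p j.castSucc = 0 := by
      intro j
      by_contra h0
      exact Tdiff_iter_ne _ _ (hne j) m _ h0 (hcast j)
    have hp0 : p j₀ = 0 := by
      apply Polynomial.eq_zero_of_infinite_isRoot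
      apply Set.infinite_of_injective_forall_mem (f := fun n : ℕ => (n : ℂ)) Nat.cast_injective
      intro n
      have h := hsum n
      rw [Fin.sum_univ_castSucc] at h
      simp only [hp, Polynomial.eval_zero, mul_zero, Finset.sum_const_zero, zero_add] at h
      exact mul_left_cancel₀ (pow_ne_zero n (hμ0 j₀))
        (by rw [h, mul_zero] : μ j₀ ^ n * (p j₀).eval (n:ℂ) = μ j₀ ^ n * 0)
    intro j
    rcases Fin.eq_castSucc_or_eq_last j with ⟨j', rfl⟩ | rfl
    · exact hp j'
    · exact hp0

end Statement5Aux

open Statement5Aux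

/-- Let `λ_1, …, λ_l` be distinct complex numbers with
`λ_a − λ_b ∉ 2πi·ℤ` for `a ≠ b`, and `k_1, …, k_l` positive integers.  Then the `V`-valued
functions `u ↦ e^{λ_j u} u^a v_b` (`1 ≤ j ≤ l`, `0 ≤ a ≤ k_j − 1`, `1 ≤ b ≤ d`) are linearly
independent over the field of one-periodic meromorphic functions on `ℂ`. -/
theorem statement_5
    (V : Type*) [AddCommGroup V] [Module ℂ V] [FiniteDimensional ℂ V]
    (d : ℕ) (B : Module.Basis (Fin d) ℂ V)
    (l : ℕ) (lam : Fin l → ℂ) (k : Fin l → ℕ) (hk : ∀ j, 0 < k j)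
    (hdist : ∀ a b : Fin l, a ≠ b →
      ∀ t : ℤ, lam a - lam b ≠ 2 * Real.pi * Complex.I * t)
    (c : ((j : Fin l) × Fin (k j) × Fin d) → ℂ → ℂ)
    (hmer : ∀ i x, MeromAt (c i) x)
    (hper : ∀ i x, c i (x + 1) = c i x)
    (hzero : ∀ x : ℂ, (∀ i, AnalyticAt ℂ (c i) x) →
      ∑ i : (j : Fin l) × Fin (k j) × Fin d,
        c i x • ((Complex.exp (lam i.1 * x) * x ^ (i.2.1 : ℕ)) • B i.2.2) = 0) :
    ∀ i x, AnalyticAt ℂ (c i) x → c i x = 0 := by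
  -- periodicity of values and analyticity
  have hval : ∀ i (z : ℂ) (n : ℕ), c i (z + n) = c i z := by
    intro i z n
    induction n with
    | zero => simp
    | succ n ih => rw [← ih, ← hper i (z + n)]; push_cast; ring_nf
  have hfun : ∀ i, (fun w : ℂ => c i (w - 1)) = c i := by
    intro i
    funext w
    rw [← hper i (w - 1), sub_add_cancel]
  have hshift : ∀ i (z : ℂ), AnalyticAt ℂ (c i) z → ∀ n : ℕ, AnalyticAt ℂ (c i) (z + n) := by
    intro i z hz n
    induction n with
    | zero => simpa
    | succ n ih =>
      have h1 : AnalyticAt ℂ (fun w : ℂ => c i (w - 1)) (z + n + 1) := by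
        apply AnalyticAt.comp (g := c i) (f := fun w : ℂ => w - 1)
        · simpa using ih
        · exact (analyticAt_id.sub analyticAt_const)
      rw [hfun i] at h1
      have : (z + (n : ℂ) + 1) = z + ((n : ℕ) + 1 : ℕ) := by push_cast; ring
      rwa [this] at h1
  -- vanishing at fully-good points
  have hgood : ∀ z : ℂ, (∀ i', AnalyticAt ℂ (c i') z) → ∀ i', c i' z = 0 := by
    intro z hz i'
    obtain ⟨j, a, b⟩ := i'
    -- scalar relations
    have hscal : ∀ n : ℕ, ∑ j' : Fin l, Complex.exp (lam j') ^ n *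
        (∑ a' : Fin (k j'), (c ⟨j', a', b⟩ z * Complex.exp (lam j' * z)) * ((n : ℂ) + z) ^ (a' : ℕ)) = 0 := by
      intro n
      have han : ∀ i', AnalyticAt ℂ (c i') (z + n) := fun i' => hshift i' z (hz i') n
      have h0 := hzero (z + n) han
      have h1 := congrArg (B.coord b) h0
      simp only [map_sum, map_smul, smul_eq_mul, Module.Basis.coord_apply, Module.Basis.repr_self,
        Finsupp.single_apply, map_zero] at h1
      rw [← Finset.univ_sigma_univ, Finset.sum_sigma] at h1
      have h2 : ∀ j' : Fin l,
          (∑ p : Fin (k j') × Fin d, c ⟨j', p⟩ (z + (n:ℂ)) *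
            (Complex.exp (lam j' * (z + (n:ℂ))) * (z + (n:ℂ)) ^ (p.1 : ℕ) * if p.2 = b then 1 else 0))
          = Complex.exp (lam j') ^ n *
            (∑ a' : Fin (k j'), (c ⟨j', a', b⟩ z * Complex.exp (lam j' * z)) * ((n : ℂ) + z) ^ (a' : ℕ)) := by
        intro j'
        rw [Fintype.sum_prod_type, Finset.mul_sum]
        apply Finset.sum_congr rfl
        intro a' _
        simp only [mul_ite, mul_one, mul_zero]
        rw [Finset.sum_ite_eq' Finset.univ b
          (fun b' => c ⟨j', (a', b')⟩ (z + (n:ℂ)) * (Complex.exp (lam j' * (z + (n:ℂ))) * (z + (n:ℂ)) ^ (a' : ℕ)))]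
        rw [if_pos (Finset.mem_univ b)]
        rw [hval ⟨j', a', b⟩ z n]
        rw [show lam j' * (z + (n:ℂ)) = lam j' * z + (n:ℂ) * lam j' by ring, Complex.exp_add,
          Complex.exp_nat_mul, show ((z + (n:ℂ))) = ((n:ℂ) + z) by ring]
        ring
      rw [Finset.sum_congr rfl (fun j' _ => h2 j')] at h1
      exact h1
    -- apply the exponential-polynomial lemma
    set μ : Fin l → ℂ := fun j' => Complex.exp (lam j') with hμ
    have hμ0 : ∀ j', μ j' ≠ 0 := fun j' => Complex.exp_ne_zero _
    have hinj : Function.Injective μ := by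
      intro a1 a2 h
      by_contra hne
      obtain ⟨t, ht⟩ := Complex.exp_eq_exp_iff_exists_int.1 h
      exact hdist a1 a2 hne t (by rw [ht]; push_cast; ring)
    set q : (j' : Fin l) → Polynomial ℂ := fun j' =>
      ∑ a' : Fin (k j'), Polynomial.C (c ⟨j', a', b⟩ z * Complex.exp (lam j' * z)) *
        Polynomial.X ^ (a' : ℕ) with hq
    set p : Fin l → Polynomial ℂ := fun j' =>
      (q j').comp (Polynomial.X + Polynomial.C z) with hpdef
    have heval : ∀ j' (n : ℕ), (p j').eval (n : ℂ) =
        ∑ a' : Fin (k j'), (c ⟨j', a', b⟩ z * Complex.exp (lam j' * z)) * ((n : ℂ) + z) ^ (a' : ℕ) := by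
      intro j' n
      simp [hpdef, hq, Polynomial.eval_comp, Polynomial.eval_finset_sum]
    have hp0 : ∀ j', p j' = 0 := by
      apply exppoly l μ hμ0 hinj
      intro n
      rw [Finset.sum_congr rfl (fun j' _ => by rw [heval j' n])]
      exact hscal n
    have hq0 : q j = 0 := by
      have h3 := congrArg (fun r => r.comp (Polynomial.X - Polynomial.C z)) (hp0 j)
      simpa [hpdef, Polynomial.comp_assoc] using h3
    have h4 := congrArg (fun r => Polynomial.coeff r (a : ℕ)) hq0
    simp only [hq, Polynomial.finset_sum_coeff, Polynomial.coeff_C_mul, Polynomial.coeff_X_pow,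
      Polynomial.coeff_zero, mul_ite, mul_one, mul_zero] at h4
    rw [Finset.sum_eq_single a (fun a' _ hne => if_neg (fun hc => hne (Fin.val_inj.1 hc.symm)))
      (fun h => absurd (Finset.mem_univ a) h), if_pos rfl] at h4
    rcases mul_eq_zero.1 h4 with h5 | h5
    · exact h5
    · exact absurd h5 (Complex.exp_ne_zero _)
  -- density argument
  intro i x hx
  have hmer' : ∀ i' (y : ℂ), MeromorphicAt (c i') y := by
    intro i' y
    obtain ⟨m, hm⟩ := hmer i' y
    exact ⟨m, by simpa [smul_eq_mul] using hm⟩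
  have hev : ∀ᶠ w in nhdsWithin x {x}ᶜ, ∀ i', AnalyticAt ℂ (c i') w := by
    rw [Filter.eventually_all]
    exact fun i' => (hmer' i' x).eventually_analyticAt
  have hev0 : ∀ᶠ w in nhdsWithin x {x}ᶜ, c i w = 0 := by
    filter_upwards [hev] with w hw
    exact hgood w hw i
  have ht1 : Filter.Tendsto (c i) (nhdsWithin x {x}ᶜ) (nhds (c i x)) :=
    (hx.continuousAt.continuousWithinAt).tendsto
  have ht2 : Filter.Tendsto (c i) (nhdsWithin x {x}ᶜ) (nhds 0) := by
    apply Filter.Tendsto.congr' (Filter.EventuallyEq.symm hev0) tendsto_const_nhds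
  exact tendsto_nhds_unique ht1 ht2
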